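/- Let k be a field of characteristic ≠ 2, let n ≥ 1, let W be the split orthogonal space of dimension 2n+1 over k, and let f ∈ k[x] be any monic separable polynomial of degree 2n+1. Then there exists a k-linear endomorphism T of W which is self-adjoint, i.e. ⟨Tv,w⟩ = ⟨v,Tw⟩ for all v,w ∈ W, and whose characteristic polynomial equals f(x). -/

import Mathlib

open Polynomial

/-- The Gram matrix of the split orthogonal space of dimension `2n+1` over `k`, in the
standard basis `e₁, …, eₙ, u, fₙ, …, f₁`: it is the anti-diagonal matrix of `1`s. -/
def splitGram (k : Type*) [Field k] (n : ℕ) : Matrix (Fin (2 * n + 1)) (Fin (2 * n + 1)) k :=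
  Matrix.of fun i j => if (i : ℕ) + (j : ℕ) = 2 * n then 1 else 0

/-- The symmetric bilinear form `⟨·,·⟩` of the split orthogonal space of dimension `2n+1`. -/
def splitBilin {k : Type*} [Field k] {n : ℕ} (v w : Fin (2 * n + 1) → k) : k :=
  dotProduct v ((splitGram k n).mulVec w)

namespace SelfAdjointAux

open Finset Matrix

variable {k : Type*} [Field k]

/-- Generic companion matrix of size `m` for the monic polynomial with lower
coefficients `b 0, …, b (m-1)`. -/
def compM (m : ℕ) (b : ℕ → k) : Matrix (Fin m) (Fin m) k :=
  Matrix.of fun i j => if (j : ℕ) = m - 1 then -b i else if (i : ℕ) = (j : ℕ) + 1 then 1 else 0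

theorem charpoly_compM : ∀ (m : ℕ) (b : ℕ → k),
    (compM m b).charpoly = X ^ m + ∑ i ∈ range m, C (b i) * X ^ i := by
  intro m
  induction m with
  | zero =>
    intro b
    simp [Matrix.charpoly, Matrix.det_fin_zero]
  | succ m IH =>
    intro b
    rcases Nat.eq_zero_or_pos m with hm | hm
    · subst hm
      rw [Matrix.charpoly, Matrix.det_fin_one]
      have h00 : compM 1 b 0 0 = -b 0 := by simp [compM]
      rw [charmatrix_apply_eq, h00]
      simp [Finset.sum_range_one]
    · -- m ≥ 1
      obtain ⟨m', rfl⟩ : ∃ m', m = m' + 1 := ⟨m - 1, by omega⟩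
      rw [Matrix.charpoly, Matrix.det_succ_row_zero]
      rw [Fin.sum_univ_succ]
      have hentry : ∀ i j : Fin (m' + 1),
          compM (m' + 1 + 1) b i.succ j.succ = compM (m' + 1) (fun u => b (u + 1)) i j := by
        intro i j
        simp only [compM, of_apply, Fin.val_succ, Nat.add_sub_cancel]
        split_ifs <;> first | rfl | omega
      rw [Finset.sum_eq_single (Fin.last m')]
      · -- two surviving terms
        have hA00 : charmatrix (compM (m' + 1 + 1) b) 0 0 = (X : k[X]) := by
          rw [charmatrix_apply_eq]
          have h0 : compM (m' + 1 + 1) b 0 0 = 0 := by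
            simp only [compM, of_apply, Fin.val_zero, Nat.add_sub_cancel]
            split_ifs <;> simp_all
          rw [h0, map_zero, sub_zero]
        have hminor0 : (charmatrix (compM (m' + 1 + 1) b)).submatrix Fin.succ
              ((0 : Fin (m' + 2)).succAbove)
            = charmatrix (compM (m' + 1) (fun u => b (u + 1))) := by
          rw [Fin.succAbove_zero]
          ext i j
          rcases eq_or_ne i j with rfl | hij
          · rw [submatrix_apply, charmatrix_apply_eq, charmatrix_apply_eq, hentry]
          · have hij' : (Fin.succ i) ≠ (Fin.succ j) := by
              simpa [Fin.ext_iff] using hij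
            rw [submatrix_apply, charmatrix_apply_ne _ _ _ hij',
              charmatrix_apply_ne _ _ _ hij, hentry]
        have hlastval : ((Fin.last m').succ : Fin (m' + 2)) = Fin.last (m' + 1) := by
          simp [Fin.ext_iff]
        have hA0last : charmatrix (compM (m' + 1 + 1) b) 0 (Fin.last (m' + 1)) = C (b 0) := by
          rw [charmatrix_apply_ne _ _ _ (by simp [Fin.ext_iff])]
          have h0 : compM (m' + 1 + 1) b 0 (Fin.last (m' + 1)) = -b 0 := by
            simp only [compM, of_apply, Fin.val_last, Fin.val_zero, Nat.add_sub_cancel]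
            simp
          rw [h0, map_neg, neg_neg]
        have hminorlast : ((charmatrix (compM (m' + 1 + 1) b)).submatrix Fin.succ
              ((Fin.last (m' + 1)).succAbove)).det
            = (-1 : k[X]) ^ (m' + 1) := by
          rw [Fin.succAbove_last]
          have htri : ((charmatrix (compM (m' + 1 + 1) b)).submatrix Fin.succ
              Fin.castSucc).BlockTriangular id := by
            intro i j hij
            have hij0 : (j : ℕ) < (i : ℕ) := hij
            rw [submatrix_apply, charmatrix_apply_ne]
            · have h0 : compM (m' + 1 + 1) b (Fin.succ i) (Fin.castSucc j) = 0 := by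
                simp only [compM, of_apply, Fin.val_succ, Fin.coe_castSucc, Nat.add_sub_cancel]
                have hj := j.isLt
                rw [if_neg (by omega), if_neg (by omega)]
              rw [h0, map_zero, neg_zero]
            · intro hc
              have h := congrArg Fin.val hc
              simp only [Fin.val_succ, Fin.coe_castSucc] at h
              omega
          rw [Matrix.det_of_upperTriangular htri]
          have hdiag : ∀ i : Fin (m' + 1),
              ((charmatrix (compM (m' + 1 + 1) b)).submatrix Fin.succ Fin.castSucc) i i = -1 := by
            intro i
            rw [submatrix_apply, charmatrix_apply_ne]
            · have h0 : compM (m' + 1 + 1) b (Fin.succ i) (Fin.castSucc i) = 1 := by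
                simp only [compM, of_apply, Fin.val_succ, Fin.coe_castSucc, Nat.add_sub_cancel]
                have hi := i.isLt
                rw [if_neg (by omega)]
                simp
              rw [h0, _root_.map_one]
            · intro hc
              have h := congrArg Fin.val hc
              simp only [Fin.val_succ, Fin.coe_castSucc] at h
              omega
          calc (∏ i : Fin (m' + 1),
              ((charmatrix (compM (m' + 1 + 1) b)).submatrix Fin.succ Fin.castSucc) i i)
              = ∏ _i : Fin (m' + 1), (-1 : k[X]) := Finset.prod_congr rfl (fun i _ => hdiag i)
            _ = (-1 : k[X]) ^ (m' + 1) := by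
                rw [Finset.prod_const]
                simp
        rw [hminor0, hA00, hlastval, hA0last, hminorlast]
        rw [show (charmatrix (compM (m' + 1) fun u => b (u + 1))).det
            = (compM (m' + 1) (fun u => b (u + 1))).charpoly from rfl]
        rw [IH]
        simp only [Fin.val_zero, Fin.val_last, pow_zero, one_mul]
        have hsign : (-1 : k[X]) ^ (m' + 1) * C (b 0) * (-1 : k[X]) ^ (m' + 1) = C (b 0) := by
          rw [mul_comm ((-1 : k[X]) ^ (m' + 1)) (C (b 0)), mul_assoc, ← pow_add]
          rw [Even.neg_one_pow ⟨m' + 1, rfl⟩, mul_one]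
        rw [hsign]
        rw [Finset.sum_range_succ' (fun i => C (b i) * X ^ i) (m' + 1)]
        rw [mul_add, Finset.mul_sum]
        have hsum : ∀ i ∈ range (m' + 1),
            X * (C (b (i + 1)) * X ^ i) = C (b (i + 1)) * X ^ (i + 1) := fun i _ => by ring
        rw [Finset.sum_congr rfl hsum]
        ring
      · intro j _ hj
        have h0 : charmatrix (compM (m' + 1 + 1) b) 0 (Fin.succ j) = 0 := by
          rw [charmatrix_apply_ne _ _ _ (Fin.succ_ne_zero j).symm]
          have h1 : compM (m' + 1 + 1) b 0 (Fin.succ j) = 0 := by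
            simp only [compM, of_apply, Fin.val_succ, Fin.val_zero, Nat.add_sub_cancel]
            have hj' : (j : ℕ) ≠ m' := by
              intro hc; exact hj (Fin.ext (by simp [hc]))
            have := j.isLt
            split_ifs <;> simp_all
          rw [h1, map_zero, neg_zero]
        rw [h0]
        ring
      · intro h
        exact absurd (Finset.mem_univ _) h

/-- Upper triangular Toeplitz matrix with symbol `c`. -/
def Umat (n : ℕ) (c : ℕ → k) : Matrix (Fin (2 * n + 1)) (Fin (2 * n + 1)) k :=
  Matrix.of fun i j => if (i : ℕ) ≤ (j : ℕ) then c ((j : ℕ) - (i : ℕ)) else 0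

theorem J_mul_apply (n : ℕ) (A : Matrix (Fin (2 * n + 1)) (Fin (2 * n + 1)) k)
    (i j : Fin (2 * n + 1)) : (splitGram k n * A) i j = A i.rev j := by
  have hv := Fin.val_rev i
  have hi := i.isLt
  rw [Matrix.mul_apply, Finset.sum_eq_single i.rev]
  · have : (i : ℕ) + (i.rev : ℕ) = 2 * n := by omega
    simp only [splitGram, of_apply]
    rw [if_pos this, one_mul]
  · intro b _ hb
    have hbv : (i : ℕ) + (b : ℕ) ≠ 2 * n := fun hc => hb (Fin.ext (by omega))
    simp [splitGram, hbv]
  · simp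

theorem mul_J_apply (n : ℕ) (A : Matrix (Fin (2 * n + 1)) (Fin (2 * n + 1)) k)
    (i j : Fin (2 * n + 1)) : (A * splitGram k n) i j = A i j.rev := by
  have hv := Fin.val_rev j
  have hj := j.isLt
  rw [Matrix.mul_apply, Finset.sum_eq_single j.rev]
  · have : (j.rev : ℕ) + (j : ℕ) = 2 * n := by omega
    simp only [splitGram, of_apply]
    rw [if_pos this, mul_one]
  · intro b _ hb
    have hbv : (b : ℕ) + (j : ℕ) ≠ 2 * n := fun hc => hb (Fin.ext (by omega))
    simp [splitGram, hbv]
  · simp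

theorem J_mul_J (n : ℕ) : (splitGram k n) * (splitGram k n) = (1 : Matrix _ _ k) := by
  ext i j
  rw [J_mul_apply]
  have hv := Fin.val_rev i
  have hi := i.isLt
  have hj := j.isLt
  simp only [splitGram, of_apply]
  rcases eq_or_ne i j with h | h
  · subst h
    rw [if_pos (by omega), Matrix.one_apply_eq]
  · have hne : (i.rev : ℕ) + (j : ℕ) ≠ 2 * n := by
      intro hc
      exact h (Fin.ext (by omega))
    rw [if_neg hne, Matrix.one_apply_ne h]

theorem Jsym (n : ℕ) : (splitGram k n)ᵀ = splitGram k n := by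
  ext i j
  simp only [transpose_apply, splitGram, of_apply]
  rw [Nat.add_comm]

theorem J_Ut_J (n : ℕ) (c : ℕ → k) :
    splitGram k n * (Umat n c)ᵀ * splitGram k n = Umat n c := by
  ext i j
  rw [mul_J_apply, J_mul_apply]
  simp only [transpose_apply, Umat, of_apply, Fin.val_rev]
  have hi : (i : ℕ) < 2 * n + 1 := i.isLt
  have hj : (j : ℕ) < 2 * n + 1 := j.isLt
  rcases le_or_gt (i : ℕ) (j : ℕ) with h | h
  · rw [if_pos (by omega), if_pos h]
    congr 1
    omega
  · rw [if_neg (by omega), if_neg (by omega)]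

theorem Umat_blockTriangular (n : ℕ) (c : ℕ → k) : (Umat n c).BlockTriangular id := by
  intro i j hij
  have h : ¬ ((i : ℕ) ≤ (j : ℕ)) := not_le.mpr hij
  simp only [Umat, of_apply]
  rw [if_neg h]

theorem Umat_det (n : ℕ) (c : ℕ → k) (hc : c 0 = 1) : (Umat n c).det = 1 := by
  rw [Matrix.det_of_upperTriangular (Umat_blockTriangular n c)]
  have : ∀ i : Fin (2 * n + 1), Umat n c i i = 1 := by
    intro i; simp [Umat, hc]
  simp [this]

theorem Umat_mul (n : ℕ) (c d : ℕ → k) :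
    Umat n c * Umat n d = Umat n (fun m => ∑ a ∈ range (m + 1), c a * d (m - a)) := by
  ext i j
  rw [Matrix.mul_apply]
  simp only [Umat, of_apply]
  rcases le_or_gt (i : ℕ) (j : ℕ) with hij | hij
  · rw [if_pos hij]
    have key : ∑ l : Fin (2 * n + 1),
        (if (i : ℕ) ≤ (l : ℕ) then c ((l : ℕ) - (i : ℕ)) else 0) *
          (if (l : ℕ) ≤ (j : ℕ) then d ((j : ℕ) - (l : ℕ)) else 0)
        = ∑ v ∈ range (2 * n + 1),
        (if (i : ℕ) ≤ v then c (v - (i : ℕ)) else 0) *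
          (if v ≤ (j : ℕ) then d ((j : ℕ) - v) else 0) :=
      Fin.sum_univ_eq_sum_range
        (fun v => (if (i : ℕ) ≤ v then c (v - (i : ℕ)) else 0) *
          (if v ≤ (j : ℕ) then d ((j : ℕ) - v) else 0)) (2 * n + 1)
    rw [key]
    have hsub : Ico (i : ℕ) ((j : ℕ) + 1) ⊆ range (2 * n + 1) := by
      intro x hx
      rw [mem_Ico] at hx
      rw [mem_range]
      have := j.isLt
      omega
    rw [← Finset.sum_subset hsub ?_]
    · rw [Finset.sum_Ico_eq_sum_range]
      have hb : (j : ℕ) + 1 - (i : ℕ) = ((j : ℕ) - (i : ℕ)) + 1 := by omega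
      rw [hb]
      apply Finset.sum_congr rfl
      intro a ha
      have ha' := mem_range.mp ha
      rw [if_pos (by omega), if_pos (by omega)]
      congr 1
      · congr 1; omega
      · congr 1; omega
    · intro x hx hx'
      rw [mem_Ico] at hx'
      push_neg at hx'
      rcases le_or_gt (i : ℕ) x with h1 | h1
      · rw [if_neg (show ¬ (x ≤ (j : ℕ)) by omega), mul_zero]
      · rw [if_neg (show ¬ ((i : ℕ) ≤ x) by omega), zero_mul]
  · rw [if_neg (by omega)]
    apply Finset.sum_eq_zero
    intro l _
    rcases le_or_gt (i : ℕ) (l : ℕ) with h1 | h1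
    · rw [if_neg (show ¬ ((l : ℕ) ≤ (j : ℕ)) by omega), mul_zero]
    · rw [if_neg (show ¬ ((i : ℕ) ≤ (l : ℕ)) by omega), zero_mul]

/-- The Hankel sequence attached to the coefficient sequence `a` of a monic polynomial of
degree `2n+1`:  `h m = 0` for `m < 2n`, `h 2n = 1`, and for larger `m` it satisfies the
linear recursion of the polynomial. -/
def hseq (n : ℕ) (a : ℕ → k) : ℕ → k
  | m =>
    if h : m ≤ 2 * n then (if m = 2 * n then 1 else 0)
    else -∑ i ∈ (range (2 * n + 1)).attach,
      a i.1 * hseq n a (m - (2 * n + 1) + i.1)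
  termination_by m => m
  decreasing_by
    have := Finset.mem_range.mp i.2
    omega

theorem hseq_lt (n : ℕ) (a : ℕ → k) {m : ℕ} (h : m < 2 * n) : hseq n a m = 0 := by
  rw [hseq]; rw [dif_pos (by omega), if_neg (by omega)]

theorem hseq_diag (n : ℕ) (a : ℕ → k) : hseq n a (2 * n) = 1 := by
  rw [hseq]; rw [dif_pos (by omega), if_pos rfl]

theorem hseq_rec (n : ℕ) (a : ℕ → k) {m : ℕ} (h : 2 * n < m) :
    hseq n a m = -∑ i ∈ range (2 * n + 1), a i * hseq n a (m - (2 * n + 1) + i) := by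
  rw [hseq]; rw [dif_neg (by omega)]
  rw [Finset.sum_attach (range (2 * n + 1)) (fun i => a i * hseq n a (m - (2 * n + 1) + i))]

/-- Square-root sequence: `cseq ℓ` is the symbol of the square root of the unipotent
upper triangular Toeplitz matrix with symbol `ℓ` (where `ℓ 0 = 1`). -/
def cseq (ℓ : ℕ → k) : ℕ → k
  | 0 => 1
  | (m + 1) => (ℓ (m + 1) - ∑ a ∈ (range m).attach, cseq ℓ (a.1 + 1) * cseq ℓ (m - a.1)) / 2
  termination_by m => m
  decreasing_by
    · have := Finset.mem_range.mp a.2; omega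
    · have := Finset.mem_range.mp a.2; omega

theorem cseq_zero (ℓ : ℕ → k) : cseq ℓ 0 = 1 := by rw [cseq]

theorem cseq_succ (ℓ : ℕ → k) (m : ℕ) :
    cseq ℓ (m + 1) = (ℓ (m + 1) - ∑ a ∈ range m, cseq ℓ (a + 1) * cseq ℓ (m - a)) / 2 := by
  rw [cseq]
  rw [Finset.sum_attach (range m) (fun a => cseq ℓ (a + 1) * cseq ℓ (m - a))]

theorem cseq_conv (ℓ : ℕ → k) (hchar : (2 : k) ≠ 0) (hl0 : ℓ 0 = 1) (m : ℕ) :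
    ∑ a ∈ range (m + 1), cseq ℓ a * cseq ℓ (m - a) = ℓ m := by
  cases m with
  | zero => simp [cseq_zero, hl0]
  | succ m =>
    rw [Finset.sum_range_succ' (fun a => cseq ℓ a * cseq ℓ (m + 1 - a)) (m + 1)]
    rw [Finset.sum_range_succ]
    simp only [Nat.succ_sub_succ, Nat.sub_self, Nat.sub_zero, cseq_zero, mul_one, one_mul]
    rw [cseq_succ]
    field_simp
    ring

/-- The Hankel matrix `M` (written as `J * Umat`). -/
theorem Mmat_apply (n : ℕ) (a : ℕ → k) (i j : Fin (2 * n + 1)) :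
    (splitGram k n * Umat n (fun m => hseq n a (2 * n + m))) i j = hseq n a ((i : ℕ) + j) := by
  rw [J_mul_apply]
  simp only [Umat, of_apply, Fin.val_rev]
  have hi := i.isLt
  have hj := j.isLt
  rcases le_or_gt (2 * n) ((i : ℕ) + (j : ℕ)) with h | h
  · rw [if_pos (by omega)]
    congr 1
    omega
  · rw [if_neg (by omega), hseq_lt n a h]

theorem M_mul_C (n : ℕ) (a : ℕ → k) :
    (splitGram k n * Umat n (fun m => hseq n a (2 * n + m))) * compM (2 * n + 1) a
      = (compM (2 * n + 1) a)ᵀ *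
        (splitGram k n * Umat n (fun m => hseq n a (2 * n + m))) := by
  have hMC : ∀ i j : Fin (2 * n + 1),
      ((splitGram k n * Umat n (fun m => hseq n a (2 * n + m))) * compM (2 * n + 1) a) i j
        = hseq n a ((i : ℕ) + (j : ℕ) + 1) := by
    intro i j
    rw [Matrix.mul_apply]
    have hj := j.isLt
    by_cases hjv : (j : ℕ) = 2 * n
    · have step : ∀ l : Fin (2 * n + 1),
          (splitGram k n * Umat n (fun m => hseq n a (2 * n + m))) i l
            * compM (2 * n + 1) a l j
          = -(a l * hseq n a ((i : ℕ) + l)) := by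
        intro l
        rw [Mmat_apply]
        have hC : compM (2 * n + 1) a l j = -a l := by
          simp only [compM, of_apply, Nat.add_sub_cancel]
          rw [if_pos hjv]
        rw [hC]
        ring
      rw [Finset.sum_congr rfl (fun l _ => step l), Finset.sum_neg_distrib]
      rw [Fin.sum_univ_eq_sum_range (fun v => a v * hseq n a ((i : ℕ) + v)) (2 * n + 1)]
      rw [hseq_rec n a (show 2 * n < (i : ℕ) + (j : ℕ) + 1 by omega)]
      congr 1
      apply Finset.sum_congr rfl
      intro v hv
      congr 1
      congr 1
      omega
    · rw [Finset.sum_eq_single (⟨(j : ℕ) + 1, by omega⟩ : Fin (2 * n + 1))]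
      · rw [Mmat_apply]
        have hC : compM (2 * n + 1) a (⟨(j : ℕ) + 1, by omega⟩ : Fin (2 * n + 1)) j = 1 := by
          simp only [compM, of_apply, Nat.add_sub_cancel]
          rw [if_neg hjv]
          simp
        rw [hC, mul_one]
        congr 1
      · intro b _ hb
        have hC : compM (2 * n + 1) a b j = 0 := by
          simp only [compM, of_apply, Nat.add_sub_cancel]
          rw [if_neg hjv, if_neg]
          intro hc
          exact hb (Fin.ext (by simpa using hc))
        rw [hC, mul_zero]
      · simp
  have hCM : ∀ i j : Fin (2 * n + 1),
      ((compM (2 * n + 1) a)ᵀ *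
        (splitGram k n * Umat n (fun m => hseq n a (2 * n + m)))) i j
        = hseq n a ((i : ℕ) + (j : ℕ) + 1) := by
    intro i j
    rw [Matrix.mul_apply]
    have hi := i.isLt
    by_cases hiv : (i : ℕ) = 2 * n
    · have step : ∀ l : Fin (2 * n + 1),
          (compM (2 * n + 1) a)ᵀ i l
            * (splitGram k n * Umat n (fun m => hseq n a (2 * n + m))) l j
          = -(a l * hseq n a ((l : ℕ) + j)) := by
        intro l
        rw [transpose_apply, Mmat_apply]
        have hC : compM (2 * n + 1) a l i = -a l := by
          simp only [compM, of_apply, Nat.add_sub_cancel]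
          rw [if_pos hiv]
        rw [hC]
        ring
      rw [Finset.sum_congr rfl (fun l _ => step l), Finset.sum_neg_distrib]
      rw [Fin.sum_univ_eq_sum_range (fun v => a v * hseq n a (v + (j : ℕ))) (2 * n + 1)]
      rw [hseq_rec n a (show 2 * n < (i : ℕ) + (j : ℕ) + 1 by omega)]
      congr 1
      apply Finset.sum_congr rfl
      intro v hv
      congr 1
      congr 1
      omega
    · rw [Finset.sum_eq_single (⟨(i : ℕ) + 1, by omega⟩ : Fin (2 * n + 1))]
      · rw [transpose_apply, Mmat_apply]
        have hC : compM (2 * n + 1) a (⟨(i : ℕ) + 1, by omega⟩ : Fin (2 * n + 1)) i = 1 := by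
          simp only [compM, of_apply, Nat.add_sub_cancel]
          rw [if_neg hiv]
          simp
        rw [hC, one_mul]
        show hseq n a ((i : ℕ) + 1 + (j : ℕ)) = _
        congr 1
        omega
      · intro b _ hb
        have hC : compM (2 * n + 1) a b i = 0 := by
          simp only [compM, of_apply, Nat.add_sub_cancel]
          rw [if_neg hiv, if_neg]
          intro hc
          exact hb (Fin.ext (by simpa using hc))
        rw [transpose_apply, hC, zero_mul]
      · simp
  ext i j
  rw [hMC i j, hCM i j]

theorem charpoly_conj {N : ℕ} (P B : Matrix (Fin N) (Fin N) k) (hP : IsUnit P.det) :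
    (P * B * P⁻¹).charpoly = B.charpoly := by
  have h1 : P * P⁻¹ = 1 := Matrix.mul_nonsing_inv P hP
  have key : (P.map (C : k →+* k[X])) * charmatrix B * ((P⁻¹).map (C : k →+* k[X]))
      = charmatrix (P * B * P⁻¹) := by
    unfold Matrix.charmatrix
    rw [RingHom.mapMatrix_apply, RingHom.mapMatrix_apply]
    rw [Matrix.mul_sub, Matrix.sub_mul]
    congr 1
    · have hc : Matrix.scalar (Fin N) (X : k[X]) * ((P⁻¹).map (C : k →+* k[X]))
          = ((P⁻¹).map (C : k →+* k[X])) * Matrix.scalar (Fin N) X :=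
        (Matrix.scalar_commute (X : k[X]) (fun r => Commute.all X r) _).eq
      calc P.map (C : k →+* k[X]) * Matrix.scalar (Fin N) X * ((P⁻¹).map (C : k →+* k[X]))
          = P.map (C : k →+* k[X]) * ((P⁻¹).map (C : k →+* k[X])) * Matrix.scalar (Fin N) X := by
            rw [Matrix.mul_assoc, hc, ← Matrix.mul_assoc]
        _ = Matrix.scalar (Fin N) X := by
            rw [← Matrix.map_mul, h1,
              Matrix.map_one _ (map_zero (C : k →+* k[X])) (map_one (C : k →+* k[X])),
              Matrix.one_mul]
    · rw [← Matrix.map_mul, ← Matrix.map_mul]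
  rw [Matrix.charpoly, Matrix.charpoly, ← key, Matrix.det_mul, Matrix.det_mul]
  have hPd : (P.map (C : k →+* k[X])).det = C P.det := by
    rw [← RingHom.mapMatrix_apply, ← RingHom.map_det]
  have hQd : ((P⁻¹).map (C : k →+* k[X])).det = C (P⁻¹).det := by
    rw [← RingHom.mapMatrix_apply, ← RingHom.map_det]
  rw [hPd, hQd, mul_right_comm, ← _root_.map_mul]
  have hd : P.det * (P⁻¹).det = 1 := by
    rw [← Matrix.det_mul, h1, Matrix.det_one]
  rw [hd, _root_.map_one, one_mul]

end SelfAdjointAux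

/-- Let `k` be a field of characteristic `≠ 2`, `n ≥ 1`, `W` the split orthogonal space of
dimension `2n+1` over `k`, and `f ∈ k[x]` monic separable of degree `2n+1`.  Then there is
a self-adjoint endomorphism `T` of `W` (`⟨Tv,w⟩ = ⟨v,Tw⟩`) with characteristic polynomial
`f`. -/
theorem exists_self_adjoint_with_charpoly {k : Type*} [Field k] (hchar : (2 : k) ≠ 0)
    (n : ℕ) (hn : 1 ≤ n)
    (f : k[X]) (hm : f.Monic) (hdeg : f.natDegree = 2 * n + 1) (hsep : f.Separable) :
    ∃ T : Matrix (Fin (2 * n + 1)) (Fin (2 * n + 1)) k,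
      (∀ v w : Fin (2 * n + 1) → k,
        splitBilin (T.mulVec v) w = splitBilin v (T.mulVec w)) ∧
      Matrix.charpoly T = f := by
  classical
  open SelfAdjointAux Finset Matrix in
  set a : ℕ → k := fun i => f.coeff i with ha
  set ℓ : ℕ → k := fun m => hseq n a (2 * n + m) with hℓ
  set c : ℕ → k := cseq ℓ with hc
  set J : Matrix (Fin (2 * n + 1)) (Fin (2 * n + 1)) k := splitGram k n with hJ
  set P : Matrix (Fin (2 * n + 1)) (Fin (2 * n + 1)) k := Umat n c with hP
  set Cm : Matrix (Fin (2 * n + 1)) (Fin (2 * n + 1)) k := compM (2 * n + 1) a with hCm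
  set Q : Matrix (Fin (2 * n + 1)) (Fin (2 * n + 1)) k := P⁻¹ with hQ
  have hl0 : ℓ 0 = 1 := by
    rw [hℓ]
    simpa using hseq_diag n a
  have hc0 : c 0 = 1 := cseq_zero ℓ
  have hPP : P * P = Umat n ℓ := by
    have hfun : (fun m => ∑ a ∈ Finset.range (m + 1), c a * c (m - a)) = ℓ :=
      funext fun m => cseq_conv ℓ hchar hl0 m
    rw [hP, Umat_mul, hfun]
  have hPdet : P.det = 1 := Umat_det n c hc0
  have hPunit : IsUnit P.det := by rw [hPdet]; exact isUnit_one
  have h1 : P * Q = 1 := Matrix.mul_nonsing_inv P hPunit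
  have h2 : Q * P = 1 := Matrix.nonsing_inv_mul P hPunit
  -- self-adjointness of P with respect to J
  have hJP : Pᵀ * J = J * P := by
    have h := congrArg Matrix.transpose (J_Ut_J n c)
    rw [Matrix.transpose_mul, Matrix.transpose_mul, Matrix.transpose_transpose,
      Jsym] at h
    -- h : J * ((Umat n c) * J) = (Umat n c)ᵀ  (up to assoc)
    have h' : J * P * J = Pᵀ := by
      rw [Matrix.mul_assoc]
      exact h
    calc Pᵀ * J = (J * P * J) * J := by rw [h']
      _ = J * P * (J * J) := by rw [Matrix.mul_assoc]
      _ = J * P := by rw [J_mul_J, Matrix.mul_one]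
  have hQJ : Qᵀ * J = J * Q := by
    have step : Qᵀ * (Pᵀ * J) * Q = Qᵀ * (J * P) * Q := by rw [hJP]
    have e1 : Qᵀ * Pᵀ = 1 := by rw [← Matrix.transpose_mul, h1, Matrix.transpose_one]
    calc Qᵀ * J = Qᵀ * J * (P * Q) := by rw [h1, Matrix.mul_one]
      _ = Qᵀ * (J * P) * Q := by
          simp only [Matrix.mul_assoc]
      _ = Qᵀ * (Pᵀ * J) * Q := by rw [hJP]
      _ = (Qᵀ * Pᵀ) * (J * Q) := by
          simp only [Matrix.mul_assoc]
      _ = J * Q := by rw [e1, Matrix.one_mul]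
  have hkey : (J * Umat n ℓ) * Cm = Cmᵀ * (J * Umat n ℓ) := M_mul_C n a
  -- the conjugate T = P Cm Q is J-self-adjoint
  have hTJ : (P * Cm * Q)ᵀ * J = J * (P * Cm * Q) := by
    have hP' : P = P * (P * Q) := by rw [h1, Matrix.mul_one]
    have hkeyP : ∀ X : Matrix (Fin (2 * n + 1)) (Fin (2 * n + 1)) k,
        Cmᵀ * (J * (P * (P * X))) = J * (P * (P * (Cm * X))) := by
      intro X
      calc Cmᵀ * (J * (P * (P * X)))
          = (Cmᵀ * (J * (P * P))) * X := by
            simp only [Matrix.mul_assoc]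
        _ = (Cmᵀ * (J * Umat n ℓ)) * X := by rw [hPP]
        _ = ((J * Umat n ℓ) * Cm) * X := by rw [hkey]
        _ = ((J * (P * P)) * Cm) * X := by rw [hPP]
        _ = J * (P * (P * (Cm * X))) := by
            simp only [Matrix.mul_assoc]
    have hQtJ : ∀ X : Matrix (Fin (2 * n + 1)) (Fin (2 * n + 1)) k,
        Qᵀ * (J * X) = J * (Q * X) := by
      intro X
      rw [← Matrix.mul_assoc, hQJ, Matrix.mul_assoc]
    have hQP : ∀ X : Matrix (Fin (2 * n + 1)) (Fin (2 * n + 1)) k,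
        Q * (P * X) = X := by
      intro X
      rw [← Matrix.mul_assoc, h2, Matrix.one_mul]
    calc (P * Cm * Q)ᵀ * J
        = Qᵀ * (Cmᵀ * (Pᵀ * J)) := by
          rw [Matrix.transpose_mul, Matrix.transpose_mul, Matrix.mul_assoc, Matrix.mul_assoc]
      _ = Qᵀ * (Cmᵀ * (J * P)) := by rw [hJP]
      _ = Qᵀ * (Cmᵀ * (J * (P * (P * Q)))) := by rw [← hP']
      _ = Qᵀ * (J * (P * (P * (Cm * Q)))) := by rw [hkeyP Q]
      _ = J * (Q * (P * (P * (Cm * Q)))) := by rw [hQtJ]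
      _ = J * (P * (Cm * Q)) := by rw [hQP]
      _ = J * (P * Cm * Q) := by rw [Matrix.mul_assoc]
  -- the characteristic polynomial
  have hf : f = X ^ (2 * n + 1) + ∑ i ∈ range (2 * n + 1), C (f.coeff i) * X ^ i := by
    conv_lhs => rw [Polynomial.as_sum_range' f (2 * n + 2) (by omega)]
    rw [Finset.sum_range_succ]
    have hlc : f.coeff (2 * n + 1) = 1 := by rw [← hdeg]; exact hm.coeff_natDegree
    rw [hlc, ← Polynomial.X_pow_eq_monomial, add_comm]
    congr 1
    apply Finset.sum_congr rfl
    intro i _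
    rw [Polynomial.C_mul_X_pow_eq_monomial]
  have hcp : (P * Cm * Q).charpoly = f := by
    rw [hQ, charpoly_conj P Cm hPunit, hCm, charpoly_compM, ← hf]
  refine ⟨P * Cm * Q, ?_, hcp⟩
  intro v w
  show dotProduct ((P * Cm * Q).mulVec v) (J.mulVec w)
      = dotProduct v (J.mulVec ((P * Cm * Q).mulVec w))
  rw [Matrix.mulVec_mulVec]
  have hvm : (P * Cm * Q).mulVec v = Matrix.vecMul v (P * Cm * Q)ᵀ := by
    rw [← Matrix.mulVec_transpose, Matrix.transpose_transpose]
  rw [hvm, Matrix.dotProduct_mulVec, Matrix.vecMul_vecMul, hTJ,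
    ← Matrix.dotProduct_mulVec]
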